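/- Let (X,Y) and (X',Y') be two jointly distributed random variables on a k-by-ℓ grid of states with k ≤ ℓ, whose joint distributions differ by moving at most δ probability mass (i.e., total variation distance at most δ), with 0 < δ ≤ 1/4. Then |I(X,Y) − I(X',Y')| ≤ 4·H_b(2δ) + 7δ log k. -/

import Mathlib

open Real Finset

/-- Shannon entropy of a finitely supported distribution. -/
noncomputable def Hfin {α : Type*} [Fintype α] (p : α → ℝ) : ℝ := ∑ i, Real.negMulLog (p i)

/-- Discrete mutual information of a joint distribution on a finite grid:
`I(X,Y) = H(X) + H(Y) - H(X,Y)`. -/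
noncomputable def MIfin {α β : Type*} [Fintype α] [Fintype β] (p : α × β → ℝ) : ℝ :=
  Hfin (fun a => ∑ b, p (a, b)) + Hfin (fun b => ∑ a, p (a, b)) - Hfin p



section AuxLemmas


lemma logSum {α : Type*} [Fintype α] (a b : α → ℝ) (ha : ∀ i, 0 ≤ a i) (hb : ∀ i, 0 ≤ b i)
    (hab : ∀ i, a i ≠ 0 → b i ≠ 0) :
    ∑ i, a i * (Real.log (b i) - Real.log (a i)) ≤
      (∑ i, a i) * (Real.log (∑ i, b i) - Real.log (∑ i, a i)) := by
  rcases eq_or_lt_of_le (Finset.sum_nonneg (fun i _ => ha i)) with h0 | hApos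
  · have hz : ∀ i ∈ Finset.univ, a i = 0 :=
      (Finset.sum_eq_zero_iff_of_nonneg (fun i _ => ha i)).1 h0.symm
    have hL : ∑ i, a i * (Real.log (b i) - Real.log (a i)) = 0 :=
      Finset.sum_eq_zero (fun i hi => by rw [hz i hi, zero_mul])
    rw [hL, ← h0, zero_mul]
  · set A := ∑ i, a i with hA
    set B := ∑ i, b i with hB
    obtain ⟨i0, hi0⟩ : ∃ i, 0 < a i := by
      by_contra hc; push_neg at hc
      have : A ≤ 0 := Finset.sum_nonpos (fun i _ => hc i)
      linarith
    have hbi0 : 0 < b i0 := (hb i0).lt_of_ne (Ne.symm (hab i0 (ne_of_gt hi0)))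
    have hBpos : 0 < B :=
      lt_of_lt_of_le hbi0 (Finset.single_le_sum (fun i _ => hb i) (Finset.mem_univ i0))
    have key : ∀ i, a i * (Real.log (b i) - Real.log (a i)) ≤
        a i * (Real.log B - Real.log A) + (A / B) * b i - a i := by
      intro i
      rcases (ha i).eq_or_lt with h | h
      · rw [← h]
        have : 0 ≤ (A / B) * b i := mul_nonneg (div_nonneg hApos.le hBpos.le) (hb i)
        simp only [zero_mul, zero_add, sub_zero]
        linarith
      · have hbi : 0 < b i := (hb i).lt_of_ne (Ne.symm (hab i (ne_of_gt h)))
        have harg : 0 < b i * A / (a i * B) := by positivity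
        have hlog := Real.log_le_sub_one_of_pos harg
        rw [Real.log_div (by positivity) (by positivity),
          Real.log_mul (ne_of_gt hbi) (ne_of_gt hApos),
          Real.log_mul (ne_of_gt h) (ne_of_gt hBpos)] at hlog
        have h2 := mul_le_mul_of_nonneg_left hlog h.le
        have hr : a i * (b i * A / (a i * B) - 1) = (A / B) * b i - a i := by
          field_simp
        nlinarith [h2, hr]
    calc ∑ i, a i * (Real.log (b i) - Real.log (a i))
        ≤ ∑ i, (a i * (Real.log B - Real.log A) + (A / B) * b i - a i) :=
          Finset.sum_le_sum (fun i _ => key i)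
      _ = A * (Real.log B - Real.log A) + (A / B) * B - A := by
          rw [Finset.sum_sub_distrib, Finset.sum_add_distrib, ← Finset.sum_mul, ← Finset.mul_sum]
      _ = A * (Real.log B - Real.log A) := by field_simp; ring

lemma rho_expand (a b : ℝ) : negMulLog a + negMulLog b - negMulLog (a + b)
    = a * (Real.log (a + b) - Real.log a) + b * (Real.log (a + b) - Real.log b) := by
  simp only [Real.negMulLog]; ring

lemma term_nonneg {a c : ℝ} (ha : 0 ≤ a) (hc : 0 ≤ c) :
    0 ≤ a * (Real.log (a + c) - Real.log a) := by
  rcases ha.eq_or_lt with h | h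
  · rw [← h]; simp
  · exact mul_nonneg h.le (sub_nonneg.2 (Real.log_le_log h (by linarith)))

lemma rho_nonneg {a b : ℝ} (ha : 0 ≤ a) (hb : 0 ≤ b) :
    0 ≤ negMulLog a + negMulLog b - negMulLog (a + b) := by
  rw [rho_expand]
  have h2 : 0 ≤ b * (Real.log (b + a) - Real.log b) := term_nonneg hb ha
  rw [add_comm b a] at h2
  exact add_nonneg (term_nonneg ha hb) h2

lemma rho_sum {α : Type*} [Fintype α] (u v : α → ℝ) (hu : ∀ i, 0 ≤ u i) (hv : ∀ i, 0 ≤ v i) :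
    ∑ i, (negMulLog (u i) + negMulLog (v i) - negMulLog (u i + v i)) ≤
      negMulLog (∑ i, u i) + negMulLog (∑ i, v i) - negMulLog ((∑ i, u i) + (∑ i, v i)) := by
  have hsum : ∑ i, (u i + v i) = (∑ i, u i) + (∑ i, v i) := Finset.sum_add_distrib
  have h1 := logSum u (fun i => u i + v i) hu (fun i => add_nonneg (hu i) (hv i))
    (fun i hi hc => by
      have h1 := (hu i).lt_of_ne (Ne.symm hi); have := hv i; linarith)
  have h2 := logSum v (fun i => u i + v i) hv (fun i => add_nonneg (hu i) (hv i))
    (fun i hi hc => by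
      have h1 := (hv i).lt_of_ne (Ne.symm hi); have := hu i; linarith)
  rw [hsum] at h1 h2
  calc ∑ i, (negMulLog (u i) + negMulLog (v i) - negMulLog (u i + v i))
      = ∑ i, (u i * (Real.log (u i + v i) - Real.log (u i))
            + v i * (Real.log (u i + v i) - Real.log (v i))) := by
        apply Finset.sum_congr rfl; intro i _; exact rho_expand (u i) (v i)
    _ = ∑ i, u i * (Real.log (u i + v i) - Real.log (u i))
        + ∑ i, v i * (Real.log (u i + v i) - Real.log (v i)) := Finset.sum_add_distrib
    _ ≤ (∑ i, u i) * (Real.log ((∑ i, u i) + (∑ i, v i)) - Real.log (∑ i, u i))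
        + (∑ i, v i) * (Real.log ((∑ i, u i) + (∑ i, v i)) - Real.log (∑ i, v i)) :=
        add_le_add h1 h2
    _ = negMulLog (∑ i, u i) + negMulLog (∑ i, v i) - negMulLog ((∑ i, u i) + (∑ i, v i)) :=
        (rho_expand _ _).symm

lemma eta_sum_le {α : Type*} [Fintype α] (v : α → ℝ) (hv : ∀ i, 0 ≤ v i) :
    negMulLog (∑ i, v i) ≤ ∑ i, negMulLog (v i) := by
  have key : ∀ i ∈ Finset.univ, -(v i * Real.log (∑ j, v j)) ≤ negMulLog (v i) := by
    intro i _
    rcases (hv i).eq_or_lt with h | h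
    · rw [← h]; simp
    · have hle : Real.log (v i) ≤ Real.log (∑ j, v j) :=
        Real.log_le_log h (Finset.single_le_sum (fun j _ => hv j) (Finset.mem_univ i))
      simp only [Real.negMulLog]
      nlinarith
  calc negMulLog (∑ i, v i) = ∑ i, -(v i * Real.log (∑ j, v j)) := by
        rw [Real.negMulLog, neg_mul, Finset.sum_mul, Finset.sum_neg_distrib]
    _ ≤ ∑ i, negMulLog (v i) := Finset.sum_le_sum key

lemma eta_sum_upper {α : Type*} [Fintype α] (v : α → ℝ) (hv : ∀ i, 0 ≤ v i) :
    ∑ i, negMulLog (v i) ≤ negMulLog (∑ i, v i) + (∑ i, v i) * Real.log (Fintype.card α) := by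
  have h := logSum v (fun _ => 1) hv (fun _ => zero_le_one) (fun _ _ => one_ne_zero)
  have hone : ∑ _i : α, (1 : ℝ) = (Fintype.card α : ℝ) := by
    rw [Finset.sum_const, Finset.card_univ, nsmul_eq_mul, mul_one]
  rw [hone] at h
  calc ∑ i, negMulLog (v i) = ∑ i, v i * (Real.log 1 - Real.log (v i)) := by
        apply Finset.sum_congr rfl; intro i _; simp [Real.negMulLog]
    _ ≤ (∑ i, v i) * (Real.log (Fintype.card α) - Real.log (∑ i, v i)) := h
    _ = negMulLog (∑ i, v i) + (∑ i, v i) * Real.log (Fintype.card α) := by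
        simp only [Real.negMulLog]; ring

lemma eta_mono {m d : ℝ} (hm : 0 ≤ m) (hmd : m ≤ d) (hd : d ≤ 1/4) :
    negMulLog m ≤ negMulLog d := by
  have hd1 : d ≤ 1 := by linarith
  rcases hm.eq_or_lt with h | h
  · rw [← h]; simp only [Real.negMulLog_zero]
    exact Real.negMulLog_nonneg (by linarith) hd1
  · have hdpos : 0 < d := lt_of_lt_of_le h hmd
    have hlog : Real.log (d / m) ≤ d / m - 1 := Real.log_le_sub_one_of_pos (by positivity)
    rw [Real.log_div (ne_of_gt hdpos) (ne_of_gt h)] at hlog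
    have h1 : m * (Real.log d - Real.log m) ≤ d - m := by
      have := mul_le_mul_of_nonneg_left hlog h.le
      have hr : m * (d / m - 1) = d - m := by field_simp
      nlinarith
    have hld : Real.log d + 1 ≤ 0 := by
      have h4 : Real.log d ≤ Real.log (1/4) := Real.log_le_log hdpos hd
      have : Real.log (1/4) = -(2 * Real.log 2) := by
        rw [show (1:ℝ)/4 = (2 * 2)⁻¹ by norm_num, Real.log_inv,
          Real.log_mul two_ne_zero two_ne_zero]
        ring
      have h2 := Real.log_two_gt_d9
      linarith
    simp only [Real.negMulLog]
    nlinarith [mul_nonneg (sub_nonneg.2 hmd) (neg_nonneg.2 hld)]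

lemma FY_onesided {α β : Type*} [Fintype α] [Fintype β] (p q D D' : α × β → ℝ) (m : ℝ)
    (hp : ∀ z, 0 ≤ p z) (hq : ∀ z, 0 ≤ q z) (hD : ∀ z, 0 ≤ D z) (hD' : ∀ z, 0 ≤ D' z)
    (hps : ∑ z, p z = 1) (hDs : ∑ z, D z = m)
    (hid : ∀ z, p z + D z = q z + D' z) :
    (∑ z, negMulLog (q z) - ∑ b, negMulLog (∑ a, q (a, b)))
      - (∑ z, negMulLog (p z) - ∑ b, negMulLog (∑ a, p (a, b)))
      ≤ m * Real.log (Fintype.card α) + (negMulLog m - negMulLog (1 + m)) := by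
  -- marginal sums over b equal total sums
  have hsplit : ∀ v : α × β → ℝ, ∑ z, v z = ∑ b, ∑ a, v (a, b) := fun v =>
    Fintype.sum_prod_type_right v
  have hyps : ∑ b, ∑ a, p (a, b) = 1 := by rw [← hsplit]; exact hps
  have hyDs : ∑ b, ∑ a, D (a, b) = m := by rw [← hsplit]; exact hDs
  have hyp0 : ∀ b, 0 ≤ ∑ a, p (a, b) := fun b => Finset.sum_nonneg fun a _ => hp (a, b)
  have hyq0 : ∀ b, 0 ≤ ∑ a, q (a, b) := fun b => Finset.sum_nonneg fun a _ => hq (a, b)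
  have hyD0 : ∀ b, 0 ≤ ∑ a, D (a, b) := fun b => Finset.sum_nonneg fun a _ => hD (a, b)
  have hyD'0 : ∀ b, 0 ≤ ∑ a, D' (a, b) := fun b => Finset.sum_nonneg fun a _ => hD' (a, b)
  -- joint entropy subadditivity (p side): HJ W ≤ HJ p + HJ D
  have e4 : ∑ z, negMulLog (p z + D z) ≤ ∑ z, negMulLog (p z) + ∑ z, negMulLog (D z) := by
    rw [← Finset.sum_add_distrib]
    exact Finset.sum_le_sum fun z _ => by have := rho_nonneg (hp z) (hD z); linarith
  -- Y-marginal superadditivity up to rho(1,m) (p side)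
  have e6 : ∑ b, (negMulLog (∑ a, p (a, b)) + negMulLog (∑ a, D (a, b))
        - negMulLog ((∑ a, p (a, b)) + (∑ a, D (a, b))))
      ≤ negMulLog 1 + negMulLog m - negMulLog (1 + m) := by
    have := rho_sum (fun b => ∑ a, p (a, b)) (fun b => ∑ a, D (a, b)) hyp0 hyD0
    rwa [hyps, hyDs] at this
  -- q side: joint rho-sum dominated by marginal rho-sum
  have e3 : ∑ z, (negMulLog (q z) + negMulLog (D' z) - negMulLog (q z + D' z))
      ≤ ∑ b, (negMulLog (∑ a, q (a, b)) + negMulLog (∑ a, D' (a, b))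
          - negMulLog ((∑ a, q (a, b)) + (∑ a, D' (a, b)))) := by
    rw [hsplit (fun z => negMulLog (q z) + negMulLog (D' z) - negMulLog (q z + D' z))]
    exact Finset.sum_le_sum fun b _ =>
      rho_sum (fun a => q (a, b)) (fun a => D' (a, b)) (fun a => hq (a, b)) (fun a => hD' (a, b))
  -- relate W in both presentations, as sums
  have eW : ∀ b, ∑ a, (p (a, b) + D (a, b)) = (∑ a, p (a, b)) + (∑ a, D (a, b)) :=
    fun b => Finset.sum_add_distrib
  have eW' : ∀ b, ∑ a, (p (a, b) + D (a, b)) = (∑ a, q (a, b)) + (∑ a, D' (a, b)) := by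
    intro b
    rw [show (fun a => p (a, b) + D (a, b)) = fun a => q (a, b) + D' (a, b) from
      funext fun a => hid (a, b)]
    exact Finset.sum_add_distrib
  have eJ : ∀ z, p z + D z = q z + D' z := hid
  -- expand the q-side joint identity
  have e1 : ∑ z, (negMulLog (q z) + negMulLog (D' z) - negMulLog (q z + D' z))
      = ∑ z, negMulLog (q z) + ∑ z, negMulLog (D' z) - ∑ z, negMulLog (p z + D z) := by
    rw [Finset.sum_sub_distrib, Finset.sum_add_distrib]
    congr 1
    exact Finset.sum_congr rfl fun z _ => by rw [eJ z]
  -- expand the marginal identities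
  have e2 : ∑ b, (negMulLog (∑ a, q (a, b)) + negMulLog (∑ a, D' (a, b))
        - negMulLog ((∑ a, q (a, b)) + (∑ a, D' (a, b))))
      = ∑ b, negMulLog (∑ a, q (a, b)) + ∑ b, negMulLog (∑ a, D' (a, b))
        - ∑ b, negMulLog (∑ a, (p (a, b) + D (a, b))) := by
    rw [Finset.sum_sub_distrib, Finset.sum_add_distrib]
    congr 1
    exact Finset.sum_congr rfl fun b _ => by rw [eW' b]
  have e5 : ∑ b, (negMulLog (∑ a, p (a, b)) + negMulLog (∑ a, D (a, b))
        - negMulLog ((∑ a, p (a, b)) + (∑ a, D (a, b))))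
      = ∑ b, negMulLog (∑ a, p (a, b)) + ∑ b, negMulLog (∑ a, D (a, b))
        - ∑ b, negMulLog (∑ a, (p (a, b) + D (a, b))) := by
    rw [Finset.sum_sub_distrib, Finset.sum_add_distrib]
    congr 1
    exact Finset.sum_congr rfl fun b _ => by rw [eW b]
  -- D' has nonnegative "conditional entropy"
  have e7 : ∑ b, negMulLog (∑ a, D' (a, b)) ≤ ∑ z, negMulLog (D' z) := by
    rw [hsplit (fun z => negMulLog (D' z))]
    exact Finset.sum_le_sum fun b _ => eta_sum_le (fun a => D' (a, b)) (fun a => hD' (a, b))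
  -- D has conditional entropy at most m log |α|
  have e8 : ∑ z, negMulLog (D z)
      ≤ ∑ b, negMulLog (∑ a, D (a, b)) + m * Real.log (Fintype.card α) := by
    rw [hsplit (fun z => negMulLog (D z))]
    calc ∑ b, ∑ a, negMulLog (D (a, b))
        ≤ ∑ b, (negMulLog (∑ a, D (a, b)) + (∑ a, D (a, b)) * Real.log (Fintype.card α)) :=
          Finset.sum_le_sum fun b _ => eta_sum_upper (fun a => D (a, b)) (fun a => hD (a, b))
      _ = ∑ b, negMulLog (∑ a, D (a, b))
          + (∑ b, ∑ a, D (a, b)) * Real.log (Fintype.card α) := by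
          rw [Finset.sum_add_distrib, Finset.sum_mul]
      _ = ∑ b, negMulLog (∑ a, D (a, b)) + m * Real.log (Fintype.card α) := by rw [hyDs]
  have hone : negMulLog (1 : ℝ) = 0 := Real.negMulLog_one
  rw [e1] at e3
  rw [e2] at e3
  rw [e5] at e6
  linarith

lemma GX_onesided {α β : Type*} [Fintype α] [Fintype β] (p q D D' : α × β → ℝ) (m : ℝ)
    (hp : ∀ z, 0 ≤ p z) (hq : ∀ z, 0 ≤ q z) (hD : ∀ z, 0 ≤ D z) (hD' : ∀ z, 0 ≤ D' z)
    (hps : ∑ z, p z = 1) (hDs : ∑ z, D z = m) (hD's : ∑ z, D' z = m)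
    (hid : ∀ z, p z + D z = q z + D' z) (hm1 : m ≤ 1) :
    ∑ a, negMulLog (∑ b, p (a, b)) - ∑ a, negMulLog (∑ b, q (a, b))
      ≤ m * Real.log (Fintype.card α) + negMulLog m + (negMulLog m - negMulLog (1 + m)) := by
  have hsplit : ∀ v : α × β → ℝ, ∑ z, v z = ∑ a, ∑ b, v (a, b) := fun v =>
    Fintype.sum_prod_type v
  have hxps : ∑ a, ∑ b, p (a, b) = 1 := by rw [← hsplit]; exact hps
  have hxDs : ∑ a, ∑ b, D (a, b) = m := by rw [← hsplit]; exact hDs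
  have hxD's : ∑ a, ∑ b, D' (a, b) = m := by rw [← hsplit]; exact hD's
  have hxp0 : ∀ a, 0 ≤ ∑ b, p (a, b) := fun a => Finset.sum_nonneg fun b _ => hp (a, b)
  have hxq0 : ∀ a, 0 ≤ ∑ b, q (a, b) := fun a => Finset.sum_nonneg fun b _ => hq (a, b)
  have hxD0 : ∀ a, 0 ≤ ∑ b, D (a, b) := fun a => Finset.sum_nonneg fun b _ => hD (a, b)
  have hxD'0 : ∀ a, 0 ≤ ∑ b, D' (a, b) := fun a => Finset.sum_nonneg fun b _ => hD' (a, b)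
  have eW : ∀ a, ∑ b, (p (a, b) + D (a, b)) = (∑ b, p (a, b)) + (∑ b, D (a, b)) :=
    fun a => Finset.sum_add_distrib
  have eW' : ∀ a, ∑ b, (p (a, b) + D (a, b)) = (∑ b, q (a, b)) + (∑ b, D' (a, b)) := by
    intro a
    rw [show (fun b => p (a, b) + D (a, b)) = fun b => q (a, b) + D' (a, b) from
      funext fun b => hid (a, b)]
    exact Finset.sum_add_distrib
  -- rho-sum over a bounded by rho(1, m)
  have f1 : ∑ a, (negMulLog (∑ b, p (a, b)) + negMulLog (∑ b, D (a, b))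
        - negMulLog ((∑ b, p (a, b)) + (∑ b, D (a, b))))
      ≤ negMulLog 1 + negMulLog m - negMulLog (1 + m) := by
    have := rho_sum (fun a => ∑ b, p (a, b)) (fun a => ∑ b, D (a, b)) hxp0 hxD0
    rwa [hxps, hxDs] at this
  have f1id : ∑ a, (negMulLog (∑ b, p (a, b)) + negMulLog (∑ b, D (a, b))
        - negMulLog ((∑ b, p (a, b)) + (∑ b, D (a, b))))
      = ∑ a, negMulLog (∑ b, p (a, b)) + ∑ a, negMulLog (∑ b, D (a, b))
        - ∑ a, negMulLog (∑ b, (p (a, b) + D (a, b))) := by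
    rw [Finset.sum_sub_distrib, Finset.sum_add_distrib]
    congr 1
    exact Finset.sum_congr rfl fun a _ => by rw [eW a]
  -- subadditivity on the q side
  have f3 : ∑ a, negMulLog (∑ b, (p (a, b) + D (a, b)))
      ≤ ∑ a, negMulLog (∑ b, q (a, b)) + ∑ a, negMulLog (∑ b, D' (a, b)) := by
    rw [← Finset.sum_add_distrib]
    refine Finset.sum_le_sum fun a _ => ?_
    rw [eW' a]
    have := rho_nonneg (hxq0 a) (hxD'0 a)
    linarith
  -- D' marginal entropy bound
  have f4 : ∑ a, negMulLog (∑ b, D' (a, b))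
      ≤ negMulLog m + m * Real.log (Fintype.card α) := by
    have := eta_sum_upper (fun a => ∑ b, D' (a, b)) hxD'0
    rwa [hxD's] at this
  -- D marginal entropy nonneg
  have f5 : 0 ≤ ∑ a, negMulLog (∑ b, D (a, b)) := by
    refine Finset.sum_nonneg fun a _ => Real.negMulLog_nonneg (hxD0 a) ?_
    calc ∑ b, D (a, b) ≤ ∑ a, ∑ b, D (a, b) :=
          Finset.single_le_sum (f := fun a => ∑ b, D (a, b)) (fun a _ => hxD0 a)
            (Finset.mem_univ a)
      _ = m := hxDs
      _ ≤ 1 := hm1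
  have hone : negMulLog (1 : ℝ) = 0 := Real.negMulLog_one
  rw [f1id] at f1
  linarith

end AuxLemmas

set_option maxHeartbeats 1000000 in
/-- If two joint distributions on a `k`-by-`ℓ` grid (with `k ≤ ℓ`) differ by moving at most
`δ ≤ 1/4` probability mass (i.e. `∑|p−q| ≤ 2δ`), then their mutual informations differ by at
most `4 H_b(2δ) + 7δ log k`. -/
theorem stmt4 (k l : ℕ) (hkl : k ≤ l) (p q : Fin k × Fin l → ℝ)
    (hp0 : ∀ z, 0 ≤ p z) (hpsum : ∑ z, p z = 1)
    (hq0 : ∀ z, 0 ≤ q z) (hqsum : ∑ z, q z = 1)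
    (δ : ℝ) (hδ0 : 0 < δ) (hδ4 : δ ≤ 1/4) (htv : ∑ z, |p z - q z| ≤ 2 * δ) :
    |MIfin p - MIfin q| ≤ 4 * Real.binEntropy (2 * δ) + 7 * δ * Real.log k := by
  have hk : 0 < k := by
    rcases Nat.eq_zero_or_pos k with hk0 | hk
    · subst hk0
      rw [Finset.univ_eq_empty, Finset.sum_empty] at hpsum
      norm_num at hpsum
    · exact hk
  set D : Fin k × Fin l → ℝ := fun z => max (q z - p z) 0 with hDdef
  set D' : Fin k × Fin l → ℝ := fun z => max (p z - q z) 0 with hD'def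
  set m : ℝ := ∑ z, D z with hmdef
  have hD0 : ∀ z, 0 ≤ D z := fun z => le_max_right _ _
  have hD'0 : ∀ z, 0 ≤ D' z := fun z => le_max_right _ _
  have hid : ∀ z, p z + D z = q z + D' z := by
    intro z
    simp only [hDdef, hD'def]
    rcases le_total (p z) (q z) with h | h
    · rw [max_eq_left (by linarith), max_eq_right (by linarith)]; ring
    · rw [max_eq_right (by linarith), max_eq_left (by linarith)]; ring
  have habs : ∀ z, D z + D' z = |p z - q z| := by
    intro z
    simp only [hDdef, hD'def]
    rcases le_total (p z) (q z) with h | h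
    · rw [max_eq_left (by linarith), max_eq_right (by linarith),
        abs_of_nonpos (by linarith)]; ring
    · rw [max_eq_right (by linarith), max_eq_left (by linarith),
        abs_of_nonneg (by linarith)]
      ring
  have hm0 : 0 ≤ m := Finset.sum_nonneg fun z _ => hD0 z
  have hD's : ∑ z, D' z = m := by
    have h1 : ∑ z, (p z + D z) = ∑ z, (q z + D' z) :=
      Finset.sum_congr rfl fun z _ => hid z
    rw [Finset.sum_add_distrib, Finset.sum_add_distrib, hpsum, hqsum] at h1
    linarith [hmdef]
  have hmδ : m ≤ δ := by
    have h2 : m + ∑ z, D' z = ∑ z, |p z - q z| := by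
      rw [hmdef, ← Finset.sum_add_distrib]
      exact Finset.sum_congr rfl fun z _ => habs z
    rw [hD's] at h2
    linarith
  have hm1 : m ≤ 1 := by linarith
  -- apply the four one-sided bounds
  have hF1 := FY_onesided p q D D' m hp0 hq0 hD0 hD'0 hpsum hmdef.symm hid
  have hF2 := FY_onesided q p D' D m hq0 hp0 hD'0 hD0 hqsum hD's (fun z => (hid z).symm)
  have hG1 := GX_onesided p q D D' m hp0 hq0 hD0 hD'0 hpsum hmdef.symm hD's hid hm1
  have hG2 := GX_onesided q p D' D m hq0 hp0 hD'0 hD0 hqsum hD's hmdef.symm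
    (fun z => (hid z).symm) hm1
  simp only [Fintype.card_fin] at hF1 hF2 hG1 hG2
  -- numeric facts
  have hL : 0 ≤ Real.log (k : ℝ) := Real.log_nonneg (by exact_mod_cast hk)
  have hmlogk : m * Real.log (k : ℝ) ≤ δ * Real.log (k : ℝ) :=
    mul_le_mul_of_nonneg_right hmδ hL
  have hηm : negMulLog m ≤ negMulLog δ := eta_mono hm0 hmδ hδ4
  have hρneg : -negMulLog (1 + m) ≤ (5/4) * m := by
    have hpos : (0:ℝ) < 1 + m := by linarith
    have hlog1m : Real.log (1 + m) ≤ m := by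
      have := Real.log_le_sub_one_of_pos hpos
      linarith
    have hlogpos : 0 ≤ Real.log (1 + m) := Real.log_nonneg (by linarith)
    simp only [Real.negMulLog]
    nlinarith
  have h2d : negMulLog (2 * δ) = 2 * negMulLog δ - 2 * δ * Real.log 2 := by
    simp only [Real.negMulLog]
    rw [Real.log_mul two_ne_zero (ne_of_gt hδ0)]
    ring
  have h1m2d : δ ≤ negMulLog (1 - 2 * δ) := by
    have hpos : (0:ℝ) < 1 - 2 * δ := by linarith
    have hlog : Real.log (1 - 2 * δ) ≤ -(2 * δ) := by
      have := Real.log_le_sub_one_of_pos hpos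
      linarith
    simp only [Real.negMulLog]
    nlinarith
  have h2dl2 : 2 * δ * Real.log 2 ≤ negMulLog (2 * δ) := by
    have hlog : Real.log (2 * δ) ≤ -Real.log 2 := by
      have h1 : Real.log (2 * δ) ≤ Real.log (1/2) :=
        Real.log_le_log (by positivity) (by linarith)
      have h2 : Real.log ((1:ℝ)/2) = -Real.log 2 := by
        rw [show (1:ℝ)/2 = 2⁻¹ by norm_num, Real.log_inv]
      linarith
    simp only [Real.negMulLog]
    nlinarith
  have hlog2 : Real.log 2 ≤ 0.7 := by
    have := Real.log_two_lt_d9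
    linarith
  have hlog2pos : 0 ≤ Real.log 2 := Real.log_nonneg (by norm_num)
  have hδl2 : δ * Real.log 2 ≤ 0.7 * δ := by nlinarith
  have hδl2pos : 0 ≤ δ * Real.log 2 := mul_nonneg hδ0.le hlog2pos
  have hδlogk : 0 ≤ δ * Real.log (k : ℝ) := mul_nonneg hδ0.le hL
  rw [Real.binEntropy_eq_negMulLog_add_negMulLog_one_sub]
  simp only [MIfin, Hfin]
  set GXp := ∑ a, negMulLog (∑ b, p (a, b)) with hGXpd
  set GXq := ∑ a, negMulLog (∑ b, q (a, b)) with hGXqd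
  set HYp := ∑ b, negMulLog (∑ a, p (a, b)) with hHYpd
  set HYq := ∑ b, negMulLog (∑ a, q (a, b)) with hHYqd
  set HJp := ∑ z, negMulLog (p z) with hHJpd
  set HJq := ∑ z, negMulLog (q z) with hHJqd
  rw [abs_le]
  constructor
  · linarith
  · linarith
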